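/- Let F : R^n → R^n be continuously differentiable with Jacobian DF(u) a P-matrix for every u. Then F is injective. -/

import Mathlib

set_option linter.unusedSectionVars false
set_option linter.unnecessarySimpa false
set_option maxHeartbeats 1600000

/-- A square real matrix is a P-matrix if all of its principal minors are positive. -/
def IsPMatrix {n : ℕ} (A : Matrix (Fin n) (Fin n) ℝ) : Prop :=
  ∀ S : Finset (Fin n), S.Nonempty →
    0 < (A.submatrix (fun i : S => (i : Fin n)) (fun j : S => (j : Fin n))).det

open Matrix BigOperators Finset Filter Topology

variable {ι : Type*} [Fintype ι] [DecidableEq ι]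

/-- All principal minors (indexed by injections from nonempty `Fin (k+1)`) are positive. -/
def AllMinorsPos (A : Matrix ι ι ℝ) : Prop :=
  ∀ (k : ℕ) (g : Fin (k + 1) → ι), Function.Injective g → 0 < (A.submatrix g g).det

namespace AllMinorsPos

variable {A : Matrix ι ι ℝ}

theorem submatrix {ι' : Type*} [Fintype ι'] [DecidableEq ι'] (hA : AllMinorsPos A)
    {f : ι' → ι} (hf : Function.Injective f) : AllMinorsPos (A.submatrix f f) := by
  intro k g hg
  rw [Matrix.submatrix_submatrix]
  exact hA k (f ∘ g) (hf.comp hg)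

theorem det_submatrix_pos {ι' : Type*} [Fintype ι'] [DecidableEq ι'] [Nonempty ι']
    (hA : AllMinorsPos A) {g : ι' → ι} (hg : Function.Injective g) :
    0 < (A.submatrix g g).det := by
  obtain ⟨k, hk⟩ := Nat.exists_eq_succ_of_ne_zero (Fintype.card_ne_zero (α := ι'))
  let e : Fin (k + 1) ≃ ι' := (Fintype.equivFinOfCardEq hk).symm
  have : (A.submatrix g g).det = ((A.submatrix g g).submatrix e e).det :=
    (Matrix.det_submatrix_equiv_self e _).symm
  rw [this, Matrix.submatrix_submatrix]
  exact hA k (g ∘ e) (hg.comp e.injective)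

theorem det_pos [Nonempty ι] (hA : AllMinorsPos A) : 0 < A.det := by
  have := hA.det_submatrix_pos (g := (id : ι → ι)) Function.injective_id
  simpa using this

theorem transpose (hA : AllMinorsPos A) : AllMinorsPos Aᵀ := by
  intro k g hg
  have : (Aᵀ).submatrix g g = (A.submatrix g g)ᵀ := rfl
  rw [this, Matrix.det_transpose]
  exact hA k g hg

end AllMinorsPos

namespace AllMinorsPos

variable {A : Matrix ι ι ℝ}

theorem minor_pos (hA : AllMinorsPos A) (S : Finset ι) (hS : S.Nonempty) :
    0 < (A.submatrix (fun i : S => (i : ι)) (fun j : S => (j : ι))).det := by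
  have : Nonempty S := hS.to_subtype
  exact hA.det_submatrix_pos Subtype.val_injective

end AllMinorsPos
theorem isPMatrix_iff_allMinorsPos {n : ℕ} {A : Matrix (Fin n) (Fin n) ℝ} :
    IsPMatrix A ↔ AllMinorsPos A := by
  constructor
  · intro h k g hg
    have hmem : ∀ i, g i ∈ Finset.univ.image g := fun i =>
      Finset.mem_image_of_mem g (Finset.mem_univ i)
    set S : Finset (Fin n) := Finset.univ.image g with hS
    have hSne : S.Nonempty := ⟨g 0, hmem 0⟩
    have hbij : Function.Bijective (fun i : Fin (k+1) => (⟨g i, hmem i⟩ : S)) := by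
      constructor
      · intro a b hab
        exact hg (congrArg Subtype.val hab)
      · rintro ⟨s, hs⟩
        rw [hS, Finset.mem_image] at hs
        obtain ⟨i, -, rfl⟩ := hs
        exact ⟨i, rfl⟩
    let e : Fin (k + 1) ≃ S := Equiv.ofBijective _ hbij
    have hfac : A.submatrix g g =
        (A.submatrix (fun i : S => (i : Fin n)) (fun j : S => (j : Fin n))).submatrix e e := by
      ext i j
      simp [e, Equiv.ofBijective]
    rw [hfac, Matrix.det_submatrix_equiv_self]
    exact h S hSne
  · intro h S hS
    exact h.minor_pos S hS

variable {ι : Type*} [Fintype ι] [DecidableEq ι]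

theorem det_piecewise_one (B : Matrix ι ι ℝ) (s : Finset ι) :
    (Matrix.of (s.piecewise (B : ι → ι → ℝ) (1 : Matrix ι ι ℝ))).det
      = (B.submatrix (fun i : s => (i : ι)) (fun j : s => (j : ι))).det := by
  classical
  set M : Matrix ι ι ℝ := Matrix.of (s.piecewise (B : ι → ι → ℝ) (1 : Matrix ι ι ℝ)) with hM
  let e : {x // x ∈ s} ⊕ {x // ¬ x ∈ s} ≃ ι := Equiv.sumCompl (· ∈ s)
  have h1 : M.det = (M.submatrix e e).det := (Matrix.det_submatrix_equiv_self e M).symm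
  have h2 : M.submatrix e e =
      Matrix.fromBlocks
        (B.submatrix (fun i : s => (i : ι)) (fun j : s => (j : ι)))
        (B.submatrix (fun i : s => (i : ι)) (fun j : {x // ¬ x ∈ s} => (j : ι)))
        0 1 := by
    ext i j
    cases i with
    | inl i =>
      cases j with
      | inl j =>
        simp [M, e, Finset.piecewise_eq_of_mem _ _ _ i.2, Finset.piecewise, i.2]
      | inr j =>
        simp [M, e, Finset.piecewise_eq_of_mem _ _ _ i.2, Finset.piecewise, i.2]
    | inr i =>
      cases j with
      | inl j =>
        have hne : (i : ι) ≠ (j : ι) := by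
          intro h
          exact i.2 (h ▸ j.2)
        simp [M, e, Finset.piecewise_eq_of_notMem _ _ _ i.2, Finset.piecewise, i.2, Matrix.one_apply_ne hne]
      | inr j =>
        by_cases h : (i : ι) = (j : ι)
        · have : i = j := Subtype.ext h
          subst this
          simp [M, e, Finset.piecewise_eq_of_notMem _ _ _ i.2, Finset.piecewise, i.2, Matrix.one_apply_eq]
        · have : i ≠ j := fun hh => h (congrArg Subtype.val hh)
          simp [M, e, Finset.piecewise_eq_of_notMem _ _ _ i.2, Finset.piecewise, i.2, Matrix.one_apply_ne h,
            Matrix.one_apply_ne this]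
  rw [h1, h2, Matrix.det_fromBlocks_zero₂₁, Matrix.det_one, mul_one]

theorem det_add_diagonal (B : Matrix ι ι ℝ) (d : ι → ℝ) :
    (B + Matrix.diagonal d).det
      = ∑ s : Finset ι, (∏ i ∈ sᶜ, d i) *
          (B.submatrix (fun i : s => (i : ι)) (fun j : s => (j : ι))).det := by
  classical
  have hdet : (B + Matrix.diagonal d).det
      = (Matrix.detRowAlternating : (ι → ℝ) [⋀^ι]→ₗ[ℝ] ℝ).toMultilinearMap
          ((B : ι → ι → ℝ) + (Matrix.diagonal d : ι → ι → ℝ)) := rfl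
  rw [hdet]; erw [MultilinearMap.map_add_univ]
  refine Finset.sum_congr rfl fun s _ => ?_
  have hrow : s.piecewise (B : ι → ι → ℝ) (Matrix.diagonal d : ι → ι → ℝ)
      = sᶜ.piecewise (fun i => d i • (s.piecewise (B : ι → ι → ℝ) (1 : Matrix ι ι ℝ)) i)
          (s.piecewise (B : ι → ι → ℝ) (1 : Matrix ι ι ℝ)) := by
    funext i
    by_cases hi : i ∈ s
    · erw [Finset.piecewise_eq_of_mem _ _ _ hi,
        Finset.piecewise_eq_of_notMem _ _ _ (by simpa using hi),
        Finset.piecewise_eq_of_mem _ _ _ hi]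
    · erw [Finset.piecewise_eq_of_notMem _ _ _ hi,
        Finset.piecewise_eq_of_mem _ _ _ (by simpa using hi),
        Finset.piecewise_eq_of_notMem _ _ _ hi]
      funext j
      by_cases hij : i = j
      · subst hij
        simp [Matrix.diagonal_apply_eq, Matrix.one_apply_eq]
      · simp [Matrix.diagonal_apply_ne _ hij, Matrix.one_apply_ne hij]
  rw [show ((Matrix.detRowAlternating : (ι → ℝ) [⋀^ι]→ₗ[ℝ] ℝ).toMultilinearMap)
        (s.piecewise (B : ι → ι → ℝ) (Matrix.diagonal d : ι → ι → ℝ)) =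
      ((Matrix.detRowAlternating : (ι → ℝ) [⋀^ι]→ₗ[ℝ] ℝ).toMultilinearMap)
        (sᶜ.piecewise (fun i => d i • (s.piecewise (B : ι → ι → ℝ) (1 : Matrix ι ι ℝ)) i)
          (s.piecewise (B : ι → ι → ℝ) (1 : Matrix ι ι ℝ))) from congrArg _ hrow,
    MultilinearMap.map_piecewise_smul]
  have h3 := det_piecewise_one B s
  rw [show ((Matrix.detRowAlternating : (ι → ℝ) [⋀^ι]→ₗ[ℝ] ℝ).toMultilinearMap)
        (s.piecewise (B : ι → ι → ℝ) (1 : Matrix ι ι ℝ))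
      = (Matrix.of (s.piecewise (B : ι → ι → ℝ) (1 : Matrix ι ι ℝ))).det from rfl, h3]
  simp [smul_eq_mul]

variable {ι : Type*} [Fintype ι] [DecidableEq ι]

theorem AllMinorsPos.add_diagonal {B : Matrix ι ι ℝ} (hB : AllMinorsPos B)
    {d : ι → ℝ} (hd : 0 ≤ d) : AllMinorsPos (B + Matrix.diagonal d) := by
  intro k g hg
  have hsub : (B + Matrix.diagonal d).submatrix g g
      = B.submatrix g g + Matrix.diagonal (d ∘ g) := by
    ext i j
    by_cases hij : i = j
    · subst hij; simp [Matrix.submatrix_apply, Matrix.diagonal_apply_eq]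
    · have : g i ≠ g j := fun h => hij (hg h)
      simp [Matrix.submatrix_apply, Matrix.diagonal_apply_ne _ hij,
        Matrix.diagonal_apply_ne _ this]
  rw [hsub, det_add_diagonal]
  have hB' : AllMinorsPos (B.submatrix g g) := hB.submatrix hg
  apply Finset.sum_pos'
  · intro s _
    apply mul_nonneg (Finset.prod_nonneg fun i _ => hd (g i))
    rcases Finset.eq_empty_or_nonempty s with rfl | hs
    · have : IsEmpty {x // x ∈ (∅ : Finset (Fin (k+1)))} :=
        ⟨fun x => absurd x.2 (Finset.notMem_empty _)⟩
      rw [Matrix.det_isEmpty]; norm_num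
    · exact le_of_lt (hB'.minor_pos s hs)
  · refine ⟨Finset.univ, Finset.mem_univ _, ?_⟩
    have h1 : (Finset.univ : Finset (Fin (k+1)))ᶜ = ∅ := Finset.compl_univ
    rw [h1]
    simp only [Finset.prod_empty, one_mul]
    exact hB'.minor_pos Finset.univ ⟨0, Finset.mem_univ 0⟩

theorem AllMinorsPos.eq_zero_of_mulVec_nonpos {A : Matrix ι ι ℝ} (hA : AllMinorsPos A)
    {z : ι → ℝ} (hz : 0 ≤ z) (hAz : A.mulVec z ≤ 0) : z = 0 := by
  by_contra hne
  obtain ⟨i0, hi0⟩ : ∃ i, z i ≠ 0 := Function.ne_iff.mp hne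
  set S : Finset ι := Finset.univ.filter (fun i => z i ≠ 0) with hSdef
  have hi0S : i0 ∈ S := by simp [hSdef, hi0]
  classical
  set d : ι → ℝ := fun i => if z i = 0 then 0 else -(A.mulVec z i) / z i with hddef
  have hd : 0 ≤ d := by
    intro i
    by_cases h : z i = 0
    · simp [hddef, h]
    · have hzi : 0 < z i := lt_of_le_of_ne (hz i) (Ne.symm h)
      simp only [hddef, h, if_false]
      exact div_nonneg (neg_nonneg.mpr (hAz i)) (le_of_lt hzi)
  set M : Matrix ι ι ℝ := A + Matrix.diagonal d with hMdef
  have hM : AllMinorsPos M := hA.add_diagonal hd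
  have hker : ∀ j, z j ≠ 0 → M.mulVec z j = 0 := by
    intro j hj
    have : M.mulVec z j = A.mulVec z j + d j * z j := by
      rw [hMdef, Matrix.add_mulVec]
      simp [Matrix.mulVec_diagonal]
    rw [this, hddef]
    simp only [hj, if_false]
    rw [div_mul_cancel₀ _ hj]
    ring
  have hMv : (M.submatrix (fun i : S => (i : ι)) (fun j : S => (j : ι))).mulVec
      (fun i : S => z i) = 0 := by
    funext j
    have hjS : z (j : ι) ≠ 0 := by
      have h2 := j.2
      exact (Finset.mem_filter.mp h2).2
    have hsum : ∑ i : S, M (j : ι) (i : ι) * z (i : ι)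
        = ∑ i ∈ S, M (j : ι) i * z i := Finset.sum_coe_sort S (fun i => M (j : ι) i * z i)
    have hfull : ∑ i ∈ S, M (j : ι) i * z i = ∑ i ∈ Finset.univ, M (j : ι) i * z i := by
      apply Finset.sum_subset (Finset.subset_univ S)
      intro x _ hx
      have : z x = 0 := by
        by_contra hzx
        exact hx (by simp [hSdef, hzx])
      simp [this]
    show ∑ i : S, M (j : ι) (i : ι) * z (i : ι) = 0
    rw [hsum, hfull]
    exact hker _ hjS
  have hdet0 : (M.submatrix (fun i : S => (i : ι)) (fun j : S => (j : ι))).det = 0 := by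
    rw [← Matrix.exists_mulVec_eq_zero_iff]
    refine ⟨fun i : S => z i, ?_, hMv⟩
    intro h0
    exact hi0 (congrFun h0 ⟨i0, hi0S⟩)
  exact absurd hdet0 (ne_of_gt (hM.minor_pos S ⟨i0, hi0S⟩))

variable {ι : Type*} [Fintype ι] [DecidableEq ι]

theorem AllMinorsPos.exists_nonneg_mulVec_pos [Nonempty ι] {A : Matrix ι ι ℝ}
    (hA : AllMinorsPos A) : ∃ x : ι → ℝ, (∀ i, 0 ≤ x i) ∧ ∀ i, 0 < A.mulVec x i := by
  classical
  by_contra hcon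
  push_neg at hcon
  -- separation setup
  set s : Set (ι → ℝ) := Set.univ.pi (fun _ => Set.Ioi (0:ℝ)) with hsdef
  have hs_mem : ∀ y : ι → ℝ, y ∈ s ↔ ∀ i, 0 < y i := by
    intro y; simp [hsdef, Set.mem_pi]
  have hs_conv : Convex ℝ s := convex_pi (fun i _ => convex_Ioi 0)
  have hs_open : IsOpen s := isOpen_set_pi Set.finite_univ (fun i _ => isOpen_Ioi)
  set t : Set (ι → ℝ) := A.mulVec '' (stdSimplex ℝ ι) with htdef
  have ht_conv : Convex ℝ t := by
    have := (convex_stdSimplex ℝ ι).linear_image (Matrix.mulVecLin A)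
    exact this
  have hdisj : Disjoint s t := by
    rw [Set.disjoint_left]
    rintro y hy ⟨x, hx, rfl⟩
    obtain ⟨i, hi⟩ := hcon x hx.1
    exact absurd ((hs_mem _).mp hy i) (not_lt.mpr hi)
  obtain ⟨f, u, hfs, hft⟩ := geometric_hahn_banach_open hs_conv hs_open ht_conv hdisj
  -- 0 ≤ u
  have hone : ∀ δ : ℝ, 0 < δ → (fun _ : ι => δ) ∈ s := by
    intro δ hδ; rw [hs_mem]; intro i; exact hδ
  have htend0 : Tendsto (fun δ : ℝ => f (fun _ => δ)) (𝓝[>] 0) (𝓝 (f (fun _ => (0:ℝ)))) := by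
    have hc : Continuous fun δ : ℝ => (fun _ : ι => δ) := continuous_pi (fun i => continuous_id)
    exact ((f.continuous.comp hc).tendsto 0).mono_left nhdsWithin_le_nhds
  have hf0 : f (fun _ => (0:ℝ)) = 0 := by
    have : (fun _ : ι => (0:ℝ)) = 0 := rfl
    rw [this, map_zero]
  have hu0 : 0 ≤ u := by
    rw [← hf0]
    refine le_of_tendsto htend0 ?_
    filter_upwards [self_mem_nhdsWithin] with δ hδ
    exact le_of_lt (hfs _ (hone δ hδ))
  -- f ≤ 0 on s
  have hfle : ∀ a ∈ s, f a ≤ 0 := by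
    intro a ha
    by_contra hpos
    push_neg at hpos
    have hr : (0:ℝ) < (u + 1) / f a := div_pos (by linarith) hpos
    have hmem : ((u + 1) / f a) • a ∈ s := by
      rw [hs_mem]
      intro i
      exact mul_pos hr ((hs_mem a).mp ha i)
    have := hfs _ hmem
    rw [_root_.map_smul, smul_eq_mul, div_mul_cancel₀ _ (ne_of_gt hpos)] at this
    linarith
  -- f ≤ 0 on the closed orthant
  have hcle : ∀ y : ι → ℝ, (∀ i, 0 ≤ y i) → f y ≤ 0 := by
    intro y hy
    have htend : Tendsto (fun δ : ℝ => f (y + fun _ => δ)) (𝓝[>] 0) (𝓝 (f (y + fun _ => (0:ℝ)))) := by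
      have hc : Continuous fun δ : ℝ => (y + fun _ : ι => δ) :=
        continuous_const.add (continuous_pi (fun i => continuous_id))
      exact ((f.continuous.comp hc).tendsto 0).mono_left nhdsWithin_le_nhds
    have hyy : (y + fun _ : ι => (0:ℝ)) = y := by funext i; simp
    rw [hyy] at htend
    refine le_of_tendsto htend ?_
    filter_upwards [self_mem_nhdsWithin] with δ hδ
    refine hfle _ ?_
    rw [hs_mem]
    intro i
    have h1 := hy i
    have h2 : 0 < δ := hδ
    have : (y + fun _ : ι => δ) i = y i + δ := rfl
    rw [this]
    linarith
  -- basis expansion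
  have hexp : ∀ y : ι → ℝ, f y = ∑ i, y i * f (Pi.single i 1) := by
    intro y
    have hy : y = ∑ i, y i • (Pi.single i (1:ℝ) : ι → ℝ) := by
      funext j
      rw [Finset.sum_apply]
      simp [Pi.single_apply]
    calc f y = f (∑ i, y i • (Pi.single i (1:ℝ) : ι → ℝ)) := by rw [← hy]
    _ = ∑ i, y i * f (Pi.single i 1) := by rw [map_sum]; simp [smul_eq_mul]
  -- the dual vector
  set lam : ι → ℝ := fun i => -(f (Pi.single i 1)) with hlamdef
  have hlam_nonneg : 0 ≤ lam := by
    intro i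
    have : f (Pi.single i 1) ≤ 0 := by
      apply hcle
      intro j
      by_cases h : j = i <;> simp [Pi.single_apply, h]
    simp [hlamdef]; linarith
  have hsingle_mem : ∀ j : ι, Pi.single j (1:ℝ) ∈ stdSimplex ℝ ι := by
    intro j
    constructor
    · intro i; by_cases h : i = j <;> simp [Pi.single_apply, h]
    · simp [Pi.single_apply]
  have hAt : Aᵀ.mulVec lam ≤ 0 := by
    intro j
    have h1 : 0 ≤ f (A.mulVec (Pi.single j 1)) := le_trans hu0 (hft _ ⟨_, hsingle_mem j, rfl⟩)
    rw [hexp] at h1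
    have h2 : ∀ i, (A.mulVec (Pi.single j 1)) i = A i j := by
      intro i
      simp [Matrix.mulVec_single]
    have h3 : (0:ℝ) ≤ ∑ i, A i j * f (Pi.single i 1) := by
      calc (0:ℝ) ≤ ∑ i, (A.mulVec (Pi.single j 1)) i * f (Pi.single i 1) := h1
      _ = ∑ i, A i j * f (Pi.single i 1) := by
            refine Finset.sum_congr rfl fun i _ => ?_
            rw [h2]
    have h4 : Aᵀ.mulVec lam j = ∑ i, A i j * lam i := by
      simp [Matrix.mulVec, dotProduct, Matrix.transpose_apply]
    rw [h4]
    simp only [hlamdef]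
    have : ∑ i, A i j * -f (Pi.single i 1) = -∑ i, A i j * f (Pi.single i 1) := by
      rw [← Finset.sum_neg_distrib]
      refine Finset.sum_congr rfl fun i _ => by ring
    rw [this]
    simp only [Pi.zero_apply]
    linarith
  have hzero := hA.transpose.eq_zero_of_mulVec_nonpos hlam_nonneg hAt
  -- lam = 0 leads to contradiction
  have hfzero : ∀ y : ι → ℝ, f y = 0 := by
    intro y
    rw [hexp]
    apply Finset.sum_eq_zero
    intro i _
    have : f (Pi.single i 1) = -lam i := by simp [hlamdef]
    rw [this, hzero]
    simp
  have h5 : (0:ℝ) < u := by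
    have := hfs _ (hone 1 one_pos)
    rwa [hfzero] at this
  have i0 : ι := Classical.arbitrary ι
  have h6 : u ≤ 0 := by
    have := hft _ ⟨_, hsingle_mem i0, rfl⟩
    rwa [hfzero] at this
  linarith

theorem AllMinorsPos.exists_pos_mulVec_pos [Nonempty ι] {A : Matrix ι ι ℝ}
    (hA : AllMinorsPos A) : ∃ D : ι → ℝ, (∀ i, 0 < D i) ∧ ∀ i, 0 < A.mulVec D i := by
  obtain ⟨x, hx0, hxpos⟩ := hA.exists_nonneg_mulVec_pos
  set w : ι → ℝ := A.mulVec (fun _ => 1) with hwdef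
  have hev : ∀ᶠ δ : ℝ in 𝓝[>] 0, ∀ i, 0 < A.mulVec x i + δ * w i := by
    refine Filter.eventually_all.mpr ?_
    intro i
    have htend : Tendsto (fun δ : ℝ => A.mulVec x i + δ * w i) (𝓝[>] 0)
        (𝓝 (A.mulVec x i + 0 * w i)) := by
      have : Continuous fun δ : ℝ => A.mulVec x i + δ * w i :=
        continuous_const.add (continuous_id.mul continuous_const)
      exact (this.tendsto 0).mono_left nhdsWithin_le_nhds
    have hpos : 0 < A.mulVec x i + 0 * w i := by simpa using hxpos i
    exact htend.eventually (eventually_gt_nhds hpos)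
  obtain ⟨δ, hδprop, hδpos⟩ := (hev.and self_mem_nhdsWithin).exists
  have hδ0 : (0:ℝ) < δ := hδpos
  refine ⟨x + fun _ => δ, fun i => ?_, ?_⟩
  · have h1 := hx0 i
    have : (x + fun _ : ι => δ) i = x i + δ := rfl
    rw [this]; linarith
  intro i
  have hlin : A.mulVec (x + fun _ => δ) i = A.mulVec x i + δ * w i := by
    rw [Matrix.mulVec_add]
    have : (fun _ : ι => δ) = δ • (fun _ : ι => (1:ℝ)) := by funext j; simp
    rw [this, Matrix.mulVec_smul]
    simp [hwdef]
  rw [hlin]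
  exact hδprop i

variable {ι : Type*} [Fintype ι] [DecidableEq ι]

/-- The linear inclusion `ℝ^m → ℝ^{m+1}` inserting a `0` at position `k`. -/
def insLin (m : ℕ) (k : Fin (m + 1)) : (Fin m → ℝ) →ₗ[ℝ] (Fin (m + 1) → ℝ) where
  toFun y := k.insertNth 0 y
  map_add' y z := by
    funext i
    rcases eq_or_ne i k with rfl | h
    · simp
    · obtain ⟨j, rfl⟩ := Fin.exists_succAbove_eq h
      simp
  map_smul' c y := by
    funext i
    rcases eq_or_ne i k with rfl | h
    · simp
    · obtain ⟨j, rfl⟩ := Fin.exists_succAbove_eq h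
      simp

theorem face_package (m : ℕ) (F : (Fin (m+1) → ℝ) → (Fin (m+1) → ℝ))
    (J : (Fin (m+1) → ℝ) → Matrix (Fin (m+1)) (Fin (m+1)) ℝ)
    (hF : Continuous F)
    (hderiv : ∀ u, HasFDerivAt F
      (LinearMap.toContinuousLinearMap (Matrix.mulVecLin (J u))) u)
    (hP : ∀ u, AllMinorsPos (J u)) (k : Fin (m+1)) (c : ℝ) :
    Continuous (fun y : Fin m → ℝ => (fun j => F (k.insertNth c y) (k.succAbove j))) ∧
    (∀ y, HasFDerivAt (fun y : Fin m → ℝ => (fun j => F (k.insertNth c y) (k.succAbove j)))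
      (LinearMap.toContinuousLinearMap (Matrix.mulVecLin
        ((J (k.insertNth c y)).submatrix k.succAbove k.succAbove))) y) ∧
    (∀ y, AllMinorsPos ((J (k.insertNth c y)).submatrix k.succAbove k.succAbove)) := by
  have hins_cont : Continuous (fun y : Fin m → ℝ => (k.insertNth c y : Fin (m+1) → ℝ)) := by
    apply continuous_pi
    intro i
    rcases eq_or_ne i k with rfl | h
    · simp only [Fin.insertNth_apply_same]
      exact continuous_const
    · obtain ⟨j, rfl⟩ := Fin.exists_succAbove_eq h
      simp only [Fin.insertNth_apply_succAbove]
      exact continuous_apply j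
  refine ⟨?_, ?_, ?_⟩
  · exact continuous_pi fun j => (continuous_apply _).comp (hF.comp hins_cont)
  · intro y
    -- derivative of the insertion map
    have hins_eq : (fun y : Fin m → ℝ => k.insertNth c y)
        = fun y => k.insertNth c (0 : Fin m → ℝ) + (insLin m k) y := by
      funext y i
      rcases eq_or_ne i k with rfl | h
      · simp [insLin]
      · obtain ⟨j, rfl⟩ := Fin.exists_succAbove_eq h
        simp [insLin, Pi.single_eq_of_ne h]
    have hins_deriv : HasFDerivAt (fun y : Fin m → ℝ => k.insertNth c y)
        (LinearMap.toContinuousLinearMap (insLin m k)) y := by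
      rw [hins_eq]
      exact (LinearMap.toContinuousLinearMap (insLin m k)).hasFDerivAt.const_add _
    set π : (Fin (m+1) → ℝ) →L[ℝ] (Fin m → ℝ) :=
      ContinuousLinearMap.pi (fun j : Fin m => ContinuousLinearMap.proj (k.succAbove j)) with hπ
    have hcomp : HasFDerivAt
        (fun y : Fin m → ℝ => π (F (k.insertNth c y)))
        ((π.comp (LinearMap.toContinuousLinearMap (Matrix.mulVecLin (J (k.insertNth c y))))).comp
          (LinearMap.toContinuousLinearMap (insLin m k))) y :=
      (π.hasFDerivAt.comp _ ((hderiv (k.insertNth c y)).comp y hins_deriv))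
    have hfun : (fun y : Fin m → ℝ => π (F (k.insertNth c y)))
        = fun y : Fin m → ℝ => (fun j => F (k.insertNth c y) (k.succAbove j)) := rfl
    have hlin : ((π.comp (LinearMap.toContinuousLinearMap
          (Matrix.mulVecLin (J (k.insertNth c y))))).comp
          (LinearMap.toContinuousLinearMap (insLin m k)))
        = LinearMap.toContinuousLinearMap (Matrix.mulVecLin
          ((J (k.insertNth c y)).submatrix k.succAbove k.succAbove)) := by
      apply ContinuousLinearMap.ext
      intro v
      funext j
      show ((J (k.insertNth c y)).mulVec (k.insertNth 0 v)) (k.succAbove j)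
        = (((J (k.insertNth c y)).submatrix k.succAbove k.succAbove).mulVec v) j
      rw [Matrix.mulVec, dotProduct, Fin.sum_univ_succAbove _ k]
      simp [Matrix.mulVec, dotProduct, Matrix.submatrix_apply]
    rw [← hfun, ← hlin]
    exact hcomp
  · intro y
    exact (hP _).submatrix (Fin.succAbove_right_injective)

theorem gn_isolated {n : ℕ} {F : (Fin n → ℝ) → (Fin n → ℝ)}
    {J : (Fin n → ℝ) → Matrix (Fin n) (Fin n) ℝ}
    (hderiv : ∀ u, HasFDerivAt F
      (LinearMap.toContinuousLinearMap (Matrix.mulVecLin (J u))) u)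
    (hP : ∀ u, AllMinorsPos (J u)) (p : Fin n → ℝ) :
    ∃ ε > 0, ∀ x, p ≤ x → F x ≤ F p → x ≠ p → ε ≤ dist x p := by
  by_contra hcon
  push_neg at hcon
  have hseq : ∀ N : ℕ, ∃ x, p ≤ x ∧ F x ≤ F p ∧ x ≠ p ∧ dist x p < 1 / (N + 1) := by
    intro N
    obtain ⟨x, h1, h2, h3, h4⟩ := hcon (1 / (N + 1)) (by positivity)
    exact ⟨x, h1, h2, h3, h4⟩
  choose u hu1 hu2 hu3 hu4 using hseq
  have htendu : Tendsto u atTop (𝓝 p) := by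
    rw [tendsto_iff_dist_tendsto_zero]
    apply squeeze_zero (fun N => dist_nonneg) (fun N => le_of_lt (hu4 N))
    exact tendsto_one_div_add_atTop_nhds_zero_nat
  have hne : ∀ N, ‖u N - p‖ ≠ 0 := fun N => by
    simpa [sub_eq_zero] using hu3 N
  set dvec : ℕ → (Fin n → ℝ) := fun N => ‖u N - p‖⁻¹ • (u N - p) with hdvec
  have hdmem : ∀ N, dvec N ∈ Metric.sphere (0 : Fin n → ℝ) 1 := by
    intro N
    rw [Metric.mem_sphere, dist_zero_right, hdvec]
    rw [norm_smul, norm_inv, norm_norm, inv_mul_cancel₀ (hne N)]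
  obtain ⟨dlim, hdlim_mem, φ, hφmono, hφtend⟩ :=
    (isCompact_sphere (0 : Fin n → ℝ) 1).tendsto_subseq hdmem
  have hdlim_norm : ‖dlim‖ = 1 := by
    simpa [dist_zero_right] using hdlim_mem
  -- nonnegativity of the limit direction
  have hd_nonneg : (0 : Fin n → ℝ) ≤ dlim := by
    intro i
    have hcomp : Tendsto (fun N => dvec (φ N) i) atTop (𝓝 (dlim i)) :=
      ((continuous_apply i).tendsto dlim).comp hφtend
    refine le_of_tendsto_of_tendsto' tendsto_const_nhds hcomp fun N => ?_
    have h1 : 0 ≤ (u (φ N) - p) i := by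
      have := hu1 (φ N) i
      simpa using this
    have h2 : (0:ℝ) ≤ ‖u (φ N) - p‖⁻¹ := by positivity
    simpa [hdvec] using mul_nonneg h2 h1
  -- remainder goes to zero
  have hremainder : Tendsto (fun N => ‖u N - p‖⁻¹ •
      (F (u N) - F p - (J p).mulVec (u N - p))) atTop (𝓝 0) := by
    have htt := (hasFDerivAt_iff_tendsto.mp (hderiv p)).comp htendu
    apply squeeze_zero_norm _ htt
    intro N
    have : (LinearMap.toContinuousLinearMap (Matrix.mulVecLin (J p))) (u N - p)
        = (J p).mulVec (u N - p) := rfl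
    rw [norm_smul, norm_inv, norm_norm]
    simp only [Function.comp_apply, this]
    exact le_refl _
  -- limit of J p applied to directions
  have hJd : Tendsto (fun N => (J p).mulVec (dvec (φ N))) atTop (𝓝 ((J p).mulVec dlim)) := by
    have hc : Continuous fun v : Fin n → ℝ => (J p).mulVec v :=
      (LinearMap.toContinuousLinearMap (Matrix.mulVecLin (J p))).continuous
    exact (hc.tendsto dlim).comp hφtend
  have hkey : (J p).mulVec dlim ≤ 0 := by
    intro i
    have hsum : Tendsto (fun N => ((J p).mulVec (dvec (φ N)) i
        + (‖u (φ N) - p‖⁻¹ • (F (u (φ N)) - F p - (J p).mulVec (u (φ N) - p))) i)) atTop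
        (𝓝 ((J p).mulVec dlim i + 0)) := by
      apply Tendsto.add
      · exact ((continuous_apply i).tendsto _).comp hJd
      · have := ((continuous_apply i).tendsto (0 : Fin n → ℝ)).comp
          (hremainder.comp hφmono.tendsto_atTop)
        simpa [Function.comp_def] using this
    rw [add_zero] at hsum
    refine le_of_tendsto_of_tendsto' hsum tendsto_const_nhds fun N => ?_
    have hid : (J p).mulVec (dvec (φ N)) i
        + (‖u (φ N) - p‖⁻¹ • (F (u (φ N)) - F p - (J p).mulVec (u (φ N) - p))) i
        = ‖u (φ N) - p‖⁻¹ * (F (u (φ N)) - F p) i := by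
      simp only [hdvec, Matrix.mulVec_smul, Pi.smul_apply, Pi.sub_apply, smul_eq_mul]
      ring
    rw [hid]
    apply mul_nonpos_of_nonneg_of_nonpos
    · positivity
    · have := hu2 (φ N) i
      simpa using this
  have hzero := (hP p).eq_zero_of_mulVec_nonpos hd_nonneg hkey
  rw [hzero] at hdlim_norm
  simp at hdlim_norm

theorem gn_star : ∀ (n : ℕ) (F : (Fin n → ℝ) → (Fin n → ℝ))
    (J : (Fin n → ℝ) → Matrix (Fin n) (Fin n) ℝ),
    Continuous F →
    (∀ u, HasFDerivAt F (LinearMap.toContinuousLinearMap (Matrix.mulVecLin (J u))) u) →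
    (∀ u, AllMinorsPos (J u)) →
    ∀ p q : Fin n → ℝ, p ≤ q → F q ≤ F p → p = q := by
  intro n
  induction n with
  | zero =>
    intro F J _ _ _ p q _ _
    funext i
    exact i.elim0
  | succ m IH =>
    intro F J hF hderiv hP p q hpq hFqp
    by_contra hne
    -- the compact set W
    set W : Set (Fin (m+1) → ℝ) := Set.Icc p q ∩ F ⁻¹' (Set.Iic (F p)) with hWdef
    have hWc : IsCompact W :=
      isCompact_Icc.inter_right (isClosed_Iic.preimage hF)
    have hqW : q ∈ W := ⟨⟨hpq, le_refl q⟩, hFqp⟩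
    -- isolation of p
    obtain ⟨ε₀, hε₀pos, hiso⟩ := gn_isolated hderiv hP p
    have hdqp : 0 < dist q p := dist_pos.mpr (Ne.symm hne)
    set ε : ℝ := min ε₀ (dist q p) with hεdef
    have hεpos : 0 < ε := lt_min hε₀pos hdqp
    set W' : Set (Fin (m+1) → ℝ) := W ∩ {x | ε ≤ dist x p} with hW'def
    have hW'c : IsCompact W' := by
      apply hWc.inter_right
      have : Continuous fun x : Fin (m+1) → ℝ => dist x p :=
        continuous_id.dist continuous_const
      exact isClosed_le continuous_const this
    have hqW' : q ∈ W' := ⟨hqW, by simp only [Set.mem_setOf_eq, hεdef]; exact min_le_right _ _⟩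
    -- every point of W other than p is in W'
    have hWW' : ∀ x ∈ W, x ≠ p → x ∈ W' := by
      intro x hx hxne
      exact ⟨hx, le_trans (min_le_left _ _) (hiso x hx.1.1 hx.2 hxne)⟩
    -- minimize the sum of coordinates over W'
    set σ : (Fin (m+1) → ℝ) → ℝ := fun x => ∑ i, x i with hσdef
    have hσc : Continuous σ := by
      apply continuous_finset_sum
      intro i _
      exact continuous_apply i
    obtain ⟨xs, hxsW', hxsmin⟩ := hW'c.exists_isMinOn ⟨q, hqW'⟩ hσc.continuousOn
    have hxsW : xs ∈ W := hxsW'.1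
    have hxs_pq : p ≤ xs ∧ xs ≤ q := hxsW.1
    have hxs_F : F xs ≤ F p := hxsW.2
    have hxs_ne : xs ≠ p := by
      intro h
      have := hxsW'.2
      rw [h] at this
      simp only [Set.mem_setOf_eq, dist_self] at this
      linarith
    -- all coordinates of xs are strictly above p (face reduction)
    have hstrict : ∀ k, p k < xs k := by
      intro k
      rcases lt_or_eq_of_le (hxs_pq.1 k) with h | h
      · exact h
      -- face reduction at coordinate k
      exfalso
      obtain ⟨hHcont, hHderiv, hHP⟩ := face_package m F J hF hderiv hP k (p k)
      have hins_p : k.insertNth (p k) (fun j => p (k.succAbove j)) = p := by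
        rw [Fin.insertNth_eq_iff]
        exact ⟨rfl, rfl⟩
      have hins_xs : k.insertNth (p k) (fun j => xs (k.succAbove j)) = xs := by
        rw [Fin.insertNth_eq_iff]
        exact ⟨h, rfl⟩
      have hle' : (fun j => p (k.succAbove j)) ≤ (fun j => xs (k.succAbove j)) :=
        fun j => hxs_pq.1 (k.succAbove j)
      have hFle' : (fun j => F (k.insertNth (p k) (fun j => xs (k.succAbove j))) (k.succAbove j))
          ≤ (fun j => F (k.insertNth (p k) (fun j => p (k.succAbove j))) (k.succAbove j)) := by
        rw [hins_p, hins_xs]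
        exact fun j => hxs_F (k.succAbove j)
      have heq := IH _ _ hHcont hHderiv hHP _ _ hle' hFle'
      -- conclude xs = p
      have : p = xs := by
        funext i
        rcases eq_or_ne i k with rfl | hik
        · exact h
        · obtain ⟨j, rfl⟩ := Fin.exists_succAbove_eq hik
          exact congrFun heq j
      exact hxs_ne this.symm
    -- descent step
    have : Nonempty (Fin (m+1)) := ⟨0⟩
    obtain ⟨D, hDpos, hADpos⟩ := (hP xs).exists_pos_mulVec_pos
    -- the curve t ↦ xs - t • D
    have hcurve : ∀ i : Fin (m+1), HasDerivAt (fun t : ℝ => F (xs - t • D) i)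
        (-((J xs).mulVec D i)) 0 := by
      intro i
      have hc : HasDerivAt (fun t : ℝ => xs - t • D) (-D) 0 := by
        have h1 : HasDerivAt (fun t : ℝ => t • D) ((1:ℝ) • D) 0 := (hasDerivAt_id 0).smul_const D
        have h2 := h1.neg.const_add xs
        have h3 : (fun t : ℝ => xs + -(t • D)) = fun t : ℝ => xs - t • D := by
          funext t; ring_nf
        simp only [Pi.neg_apply] at h2
        rw [h3] at h2
        simpa using h2
      have h0 : xs - (0:ℝ) • D = xs := by simp
      have hfd : HasFDerivAt F
          (LinearMap.toContinuousLinearMap (Matrix.mulVecLin (J xs))) (xs - (0:ℝ) • D) := by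
        rw [h0]; exact hderiv xs
      have hcomp : HasDerivAt (fun t : ℝ => F (xs - t • D))
          ((LinearMap.toContinuousLinearMap (Matrix.mulVecLin (J xs))) (-D)) 0 :=
        hfd.comp_hasDerivAt 0 hc
      have := hasDerivAt_pi.mp hcomp i
      have hval : ((LinearMap.toContinuousLinearMap (Matrix.mulVecLin (J xs))) (-D)) i
          = -((J xs).mulVec D i) := by
        have : (J xs).mulVec (-D) = -((J xs).mulVec D) := by
          rw [← Matrix.mulVec_neg]
        show ((J xs).mulVec (-D)) i = -((J xs).mulVec D i)
        rw [this]
        rfl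
      rwa [hval] at this
    -- eventually all required strict inequalities hold
    have hev1 : ∀ᶠ t : ℝ in 𝓝[>] 0, ∀ i, F (xs - t • D) i < F xs i := by
      refine Filter.eventually_all.mpr fun i => ?_
      have hslope := hasDerivAt_iff_tendsto_slope.mp (hcurve i)
      have hslope' : Tendsto (slope (fun t : ℝ => F (xs - t • D) i) 0) (𝓝[>] 0)
          (𝓝 (-((J xs).mulVec D i))) :=
        hslope.mono_left (nhdsWithin_mono 0 (fun t ht => ne_of_gt ht))
      have hneg : -((J xs).mulVec D i) < 0 := neg_lt_zero.mpr (hADpos i)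
      have hev := hslope'.eventually_lt_const hneg
      filter_upwards [hev, self_mem_nhdsWithin] with t hts htpos
      have htpos' : (0:ℝ) < t := htpos
      rw [slope_def_field, sub_zero] at hts
      have h5 : F (xs - t • D) i - F (xs - (0:ℝ) • D) i < 0 := by
        by_contra hge
        push_neg at hge
        exact absurd hts (not_lt.mpr (div_nonneg hge (le_of_lt htpos')))
      have h6 : xs - (0:ℝ) • D = xs := by simp
      rw [h6] at h5
      linarith
    have hev2 : ∀ᶠ t : ℝ in 𝓝[>] 0, ∀ j, p j < xs j - t * D j := by
      refine Filter.eventually_all.mpr fun j => ?_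
      have htend : Tendsto (fun t : ℝ => xs j - t * D j) (𝓝[>] 0) (𝓝 (xs j - 0 * D j)) := by
        have : Continuous fun t : ℝ => xs j - t * D j :=
          continuous_const.sub (continuous_id.mul continuous_const)
        exact (this.tendsto 0).mono_left nhdsWithin_le_nhds
      have : p j < xs j - 0 * D j := by simpa using hstrict j
      exact htend.eventually_const_lt this
    obtain ⟨t, ⟨ht1, ht2⟩, ht3⟩ := ((hev1.and hev2).and self_mem_nhdsWithin).exists
    have htpos : (0:ℝ) < t := ht3
    set z : Fin (m+1) → ℝ := xs - t • D with hzdef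
    have hz_lt : ∀ j, p j < z j := by
      intro j
      have := ht2 j
      simpa [hzdef, smul_eq_mul] using this
    have hzW : z ∈ W := by
      refine ⟨⟨fun j => le_of_lt (hz_lt j), fun j => ?_⟩, fun j => ?_⟩
      · have h1 : z j ≤ xs j := by
          have : (0:ℝ) ≤ t * D j := le_of_lt (mul_pos htpos (hDpos j))
          simp only [hzdef, Pi.sub_apply, Pi.smul_apply, smul_eq_mul]
          linarith
        exact le_trans h1 (hxs_pq.2 j)
      · have h1 : F z j < F xs j := ht1 j
        exact le_of_lt (lt_of_lt_of_le h1 (hxs_F j))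
    have hzne : z ≠ p := fun h => absurd (congrFun h 0) (ne_of_gt (hz_lt 0))
    have hzW' : z ∈ W' := hWW' z hzW hzne
    have hcontr := hxsmin hzW'
    -- σ z < σ xs
    have hσlt : σ z < σ xs := by
      have : σ z = σ xs - t * ∑ i, D i := by
        simp only [hσdef, hzdef, Pi.sub_apply, Pi.smul_apply, smul_eq_mul,
          Finset.sum_sub_distrib, Finset.mul_sum]
      rw [this]
      have hsum : 0 < ∑ i, D i := Finset.sum_pos (fun i _ => hDpos i) Finset.univ_nonempty
      have : 0 < t * ∑ i, D i := mul_pos htpos hsum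
      linarith
    exact absurd (hcontr : σ xs ≤ σ z) (not_le.mpr hσlt)

theorem AllMinorsPos.diag_conj {ι : Type*} [Fintype ι] [DecidableEq ι]
    {A : Matrix ι ι ℝ} (hA : AllMinorsPos A) {e : ι → ℝ} (he : ∀ i, e i * e i = 1) :
    AllMinorsPos (Matrix.diagonal e * A * Matrix.diagonal e) := by
  intro k g hg
  have hsub : (Matrix.diagonal e * A * Matrix.diagonal e).submatrix g g
      = Matrix.diagonal (e ∘ g) * (A.submatrix g g) * Matrix.diagonal (e ∘ g) := by
    ext i j
    simp only [Matrix.submatrix_apply, Matrix.mul_diagonal, Matrix.diagonal_mul,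
      Function.comp_apply]
  rw [hsub, Matrix.det_mul, Matrix.det_mul, Matrix.det_diagonal]
  have h1 : (∏ i, (e ∘ g) i) * (A.submatrix g g).det * (∏ i, (e ∘ g) i)
      = (A.submatrix g g).det * ((∏ i, (e ∘ g) i) * (∏ i, (e ∘ g) i)) := by ring
  rw [h1, ← Finset.prod_mul_distrib]
  have h2 : ∏ i : Fin (k+1), ((e ∘ g) i * (e ∘ g) i) = 1 := by
    apply Finset.prod_eq_one
    intro i _
    exact he (g i)
  rw [h2, mul_one]
  exact hA k g hg

theorem galeNikaido_injective {n : ℕ} (F : (Fin n → ℝ) → (Fin n → ℝ))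
    (J : (Fin n → ℝ) → Matrix (Fin n) (Fin n) ℝ)
    (hC1 : ContDiff ℝ 1 F)
    (hderiv : ∀ u, HasFDerivAt F
      (LinearMap.toContinuousLinearMap (Matrix.mulVecLin (J u))) u)
    (hP : ∀ u, IsPMatrix (J u)) :
    Function.Injective F := by
  intro a b hab
  classical
  set e : Fin n → ℝ := fun i => if a i ≤ b i then 1 else -1 with hedef
  have he2 : ∀ i, e i * e i = 1 := by
    intro i
    by_cases h : a i ≤ b i <;> simp [hedef, h]
  have hene : ∀ i, e i ≠ 0 := by
    intro i
    by_cases h : a i ≤ b i <;> simp [hedef, h]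
  set Lf : (Fin n → ℝ) →L[ℝ] (Fin n → ℝ) :=
    LinearMap.toContinuousLinearMap (Matrix.mulVecLin (Matrix.diagonal e)) with hLf
  have hLf_apply : ∀ x : Fin n → ℝ, Lf x = fun i => e i * x i := by
    intro x
    funext i
    show (Matrix.diagonal e).mulVec x i = e i * x i
    rw [Matrix.mulVec_diagonal]
  have hLfLf : ∀ x : Fin n → ℝ, Lf (Lf x) = x := by
    intro x
    rw [hLf_apply, hLf_apply]
    funext i
    simp only
    rw [← mul_assoc, he2, one_mul]
  set G : (Fin n → ℝ) → (Fin n → ℝ) := fun x => Lf (F (Lf x)) with hGdef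
  set JG : (Fin n → ℝ) → Matrix (Fin n) (Fin n) ℝ :=
    fun x => Matrix.diagonal e * J (Lf x) * Matrix.diagonal e with hJGdef
  have hGcont : Continuous G := Lf.continuous.comp (hC1.continuous.comp Lf.continuous)
  have hGderiv : ∀ x, HasFDerivAt G
      (LinearMap.toContinuousLinearMap (Matrix.mulVecLin (JG x))) x := by
    intro x
    have hchain : HasFDerivAt G
        ((Lf.comp (LinearMap.toContinuousLinearMap
          (Matrix.mulVecLin (J (Lf x))))).comp Lf) x :=
      Lf.hasFDerivAt.comp _ ((hderiv (Lf x)).comp x Lf.hasFDerivAt)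
    have heq : ((Lf.comp (LinearMap.toContinuousLinearMap
          (Matrix.mulVecLin (J (Lf x))))).comp Lf)
        = LinearMap.toContinuousLinearMap (Matrix.mulVecLin (JG x)) := by
      apply ContinuousLinearMap.ext
      intro v
      show (Matrix.diagonal e).mulVec ((J (Lf x)).mulVec ((Matrix.diagonal e).mulVec v))
        = (JG x).mulVec v
      rw [Matrix.mulVec_mulVec, Matrix.mulVec_mulVec, hJGdef]
    rw [← heq]
    exact hchain
  have hGP : ∀ x, AllMinorsPos (JG x) :=
    fun x => (isPMatrix_iff_allMinorsPos.mp (hP (Lf x))).diag_conj he2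
  set p : Fin n → ℝ := Lf a with hpdef
  set q : Fin n → ℝ := Lf b with hqdef
  have hpq : p ≤ q := by
    intro i
    rw [hpdef, hqdef, hLf_apply, hLf_apply]
    simp only
    by_cases h : a i ≤ b i
    · simpa [hedef, h] using h
    · simp only [hedef, h, if_false]
      push_neg at h
      linarith
  have hGq : G q = G p := by
    rw [hGdef]
    simp only
    rw [hqdef, hpdef, hLfLf, hLfLf, hab]
  have := gn_star n G JG hGcont hGderiv hGP p q hpq (le_of_eq hGq)
  have hba : Lf a = Lf b := this
  have := congrArg Lf hba
  rwa [hLfLf, hLfLf] at this
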